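/- arXiv:1006.4425 — 4 statements merged into one kernel-verified Lean document; each statement's English description precedes it below -/
import Mathlib

section
/- Let S be a countable type, β : ℕ → ℝ≥0∞ with ∑'_{i} β i = 1, and q : ℕ → S → ℝ≥0∞ with ∑'_{x} q i x ≤ 1 for every i. Define p x = ∑'_{i ∈ ℕ} β i * q i x. Let R ∈ ℕ and ε ∈ ℝ≥0∞ be such that ∑_{i=0}^{R} β i ≥ 1 − ε. Then (a) for every x ∈ S, ∑_{i=0}^{R} β i * q i x ≤ p x, and (b) ∑'_{x ∈ S} (p x − ∑_{i=0}^{R} β i * q i x) ≤ ε. -/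
open scoped ENNReal

/-- Truncation of the uniformization series: the truncated sum underapproximates
the transient probability pointwise, with total error at most `ε`. -/
theorem truncated_uniformization_error
    {S : Type*} [Countable S]
    (β : ℕ → ℝ≥0∞) (hβ : ∑' i, β i = 1)
    (q : ℕ → S → ℝ≥0∞) (hq : ∀ i, ∑' x, q i x ≤ 1)
    (p : S → ℝ≥0∞) (hp : ∀ x, p x = ∑' i : ℕ, β i * q i x)
    (R : ℕ) (ε : ℝ≥0∞)
    (hR : 1 - ε ≤ ∑ i ∈ Finset.range (R + 1), β i) :
    (∀ x : S, ∑ i ∈ Finset.range (R + 1), β i * q i x ≤ p x) ∧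
      ∑' x : S, (p x - ∑ i ∈ Finset.range (R + 1), β i * q i x) ≤ ε := by
  have hsplit : ∀ f : ℕ → ℝ≥0∞,
      ∑' i, f i = (∑ i ∈ Finset.range (R + 1), f i) + ∑' i : ℕ, f (i + (R + 1)) := by
    intro f
    exact (Summable.sum_add_tsum_nat_add' (f := f) (k := R + 1) ENNReal.summable).symm
  constructor
  · intro x
    rw [hp]
    exact ENNReal.sum_le_tsum _
  · have key : ∀ x : S, p x - ∑ i ∈ Finset.range (R + 1), β i * q i x
        = ∑' i : ℕ, β (i + (R + 1)) * q (i + (R + 1)) x := by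
      intro x
      rw [hp, hsplit (fun i => β i * q i x)]
      refine ENNReal.add_sub_cancel_left ?_
      refine (ENNReal.sum_lt_top.2 fun i _ => ?_).ne
      have h : β i * q i x ≤ 1 * 1 :=
        mul_le_mul' (le_trans (ENNReal.le_tsum i) hβ.le)
          (le_trans (ENNReal.le_tsum x) (hq i))
      exact lt_of_le_of_lt (by simpa using h) ENNReal.one_lt_top
    have htail : (∑ i ∈ Finset.range (R + 1), β i) + ∑' i : ℕ, β (i + (R + 1)) = 1 := by
      rw [← hsplit β, hβ]
    have hfin : (∑ i ∈ Finset.range (R + 1), β i) ≠ ⊤ :=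
      ne_top_of_le_ne_top ENNReal.one_ne_top (le_trans (ENNReal.sum_le_tsum _) hβ.le)
    calc ∑' x : S, (p x - ∑ i ∈ Finset.range (R + 1), β i * q i x)
        = ∑' x : S, ∑' i : ℕ, β (i + (R + 1)) * q (i + (R + 1)) x := tsum_congr key
      _ = ∑' i : ℕ, ∑' x : S, β (i + (R + 1)) * q (i + (R + 1)) x := ENNReal.tsum_comm
      _ ≤ ∑' i : ℕ, β (i + (R + 1)) := by
          refine ENNReal.tsum_le_tsum fun i => ?_
          rw [ENNReal.tsum_mul_left]
          exact mul_le_of_le_one_right' (hq _)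
      _ = 1 - ∑ i ∈ Finset.range (R + 1), β i := by
          rw [← htail, ENNReal.add_sub_cancel_left hfin]
      _ ≤ ε := by
          refine tsub_le_iff_left.mpr ?_
          calc (1 : ℝ≥0∞) ≤ ε + (1 - ε) := le_tsub_add.trans (by rw [add_comm])
            _ ≤ ε + ∑ i ∈ Finset.range (R + 1), β i := add_le_add_right hR ε
            _ = ∑ i ∈ Finset.range (R + 1), β i + ε := add_comm _ _
end

section
/- Let S be a countable type, P : S → S → ℝ≥0∞ a stochastic kernel (∑'_{y} P x y = 1 for every x), U : S → S → ℝ≥0∞ with U x y ≤ P x y for all x, y, and μ, v : S → ℝ≥0∞ with v x ≤ μ x for every x. Let β : ℕ → ℝ≥0∞ with ∑'_{i} β i = 1 and R ∈ ℕ. Then for every x ∈ S: ∑_{i=0}^{R} β i * (v·U^i) x ≤ ∑'_{i ∈ ℕ} β i * (μ·P^i) x. -/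
open scoped ENNReal

/-- The one-step image `v·K` of a vector `v` under a kernel `K`. -/
noncomputable def kernelStep {S : Type*} (v : S → ℝ≥0∞) (K : S → S → ℝ≥0∞) : S → ℝ≥0∞ :=
  fun y => ∑' x, v x * K x y

/-- The `i`-fold iterate `v·K^i` (so `v·K^0 = v` and `v·K^{i+1} = (v·K^i)·K`). -/
noncomputable def kernelIter {S : Type*} (v : S → ℝ≥0∞) (K : S → S → ℝ≥0∞) : ℕ → S → ℝ≥0∞
  | 0 => v
  | i + 1 => kernelStep (kernelIter v K i) K

/-- Main underapproximation guarantee of the uniformization algorithm: the computed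
approximation `∑_{i=0}^R β i * (v·U^i) x` is a pointwise lower bound on the true
transient probability `∑'_{i} β i * (μ·P^i) x`. -/
theorem uniformization_underapproximation
    {S : Type*} [Countable S]
    (P : S → S → ℝ≥0∞) (hP : ∀ x, ∑' y, P x y = 1)
    (U : S → S → ℝ≥0∞) (hU : ∀ x y, U x y ≤ P x y)
    (μ v : S → ℝ≥0∞) (hv : ∀ x, v x ≤ μ x)
    (β : ℕ → ℝ≥0∞) (hβ : ∑' i, β i = 1) (R : ℕ) :
    ∀ x : S,
      ∑ i ∈ Finset.range (R + 1), β i * kernelIter v U i x ≤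
        ∑' i : ℕ, β i * kernelIter μ P i x := by
  intro x
  have key : ∀ i x, kernelIter v U i x ≤ kernelIter μ P i x := by
    intro i
    induction i with
    | zero => exact hv
    | succ i ih =>
      intro y
      exact ENNReal.tsum_le_tsum fun z => mul_le_mul' (ih z) (hU z y)
  calc ∑ i ∈ Finset.range (R + 1), β i * kernelIter v U i x
      ≤ ∑ i ∈ Finset.range (R + 1), β i * kernelIter μ P i x :=
        Finset.sum_le_sum fun i _ => mul_le_mul' le_rfl (key i x)
    _ ≤ ∑' i : ℕ, β i * kernelIter μ P i x := ENNReal.sum_le_tsum _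
end

section
/- Let S be a countable type, P : S → S → ℝ≥0∞ a stochastic kernel (∑'_{y} P x y = 1 for every x), and μ : S → ℝ≥0∞ with ∑'_{x} μ x = 1. Let β : ℕ → ℝ≥0∞ with ∑'_{i} β i = 1 and let R ∈ ℕ, ε ∈ ℝ≥0∞ satisfy ∑_{i=0}^{R} β i ≥ 1 − ε. Define p x = ∑'_{i} β i * (μ·P^i) x and p̂ x = ∑_{i=0}^{R} β i * (μ·P^i) x. Then ∑'_{x ∈ S} (p x − p̂ x) ≤ ε. In particular ∑'_{x} (μ·P^i) x = 1 for every i. -/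
open scoped ENNReal

lemma kernelIter_mass {S : Type*} (P : S → S → ℝ≥0∞) (hP : ∀ x, ∑' y, P x y = 1)
    (μ : S → ℝ≥0∞) (hμ : ∑' x, μ x = 1) (i : ℕ) :
    ∑' x : S, kernelIter μ P i x = 1 := by
  induction i with
  | zero => exact hμ
  | succ n ih =>
    simp only [kernelIter, kernelStep]
    rw [ENNReal.tsum_comm]
    calc ∑' (x : S) (y : S), kernelIter μ P n x * P x y
        = ∑' x, kernelIter μ P n x * ∑' y, P x y := by
          congr 1; ext x; rw [ENNReal.tsum_mul_left]
      _ = 1 := by simp [hP, ih]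

/-- If the DTMC step is computed exactly and only the infinite uniformization series
is truncated at `R`, the total approximation error is at most the truncation error `ε`;
in particular each `μ·P^i` is a probability distribution. -/
theorem exact_truncation_error
    {S : Type*} [Countable S]
    (P : S → S → ℝ≥0∞) (hP : ∀ x, ∑' y, P x y = 1)
    (μ : S → ℝ≥0∞) (hμ : ∑' x, μ x = 1)
    (β : ℕ → ℝ≥0∞) (hβ : ∑' i, β i = 1)
    (R : ℕ) (ε : ℝ≥0∞)
    (hR : 1 - ε ≤ ∑ i ∈ Finset.range (R + 1), β i)
    (p phat : S → ℝ≥0∞)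
    (hp : ∀ x, p x = ∑' i : ℕ, β i * kernelIter μ P i x)
    (hphat : ∀ x, phat x = ∑ i ∈ Finset.range (R + 1), β i * kernelIter μ P i x) :
    (∑' x : S, (p x - phat x) ≤ ε) ∧ ∀ i : ℕ, ∑' x : S, kernelIter μ P i x = 1 := by
  have hmass := kernelIter_mass P hP μ hμ
  refine ⟨?_, hmass⟩
  have hsplit : ∀ x, p x - phat x ≤ ∑' i : ℕ, β (i + (R+1)) * kernelIter μ P (i + (R+1)) x := by
    intro x
    rw [hp x, hphat x, ← Summable.sum_add_tsum_nat_add' (f := fun i => β i * kernelIter μ P i x) (k := R+1) ENNReal.summable]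
    exact tsub_le_iff_left.mpr le_rfl
  calc ∑' x : S, (p x - phat x)
      ≤ ∑' x : S, ∑' i : ℕ, β (i + (R+1)) * kernelIter μ P (i + (R+1)) x :=
        ENNReal.tsum_le_tsum hsplit
    _ = ∑' i : ℕ, β (i + (R+1)) := by
        rw [ENNReal.tsum_comm]
        congr 1; ext i
        rw [ENNReal.tsum_mul_left, hmass, mul_one]
    _ = 1 - ∑ i ∈ Finset.range (R + 1), β i := by
        rw [← hβ, ← Summable.sum_add_tsum_nat_add' (f := β) (k := R+1) ENNReal.summable]
        rw [ENNReal.add_sub_cancel_left]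
        exact (lt_of_le_of_lt (ENNReal.sum_le_tsum _) (hβ ▸ ENNReal.one_lt_top)).ne
    _ ≤ ε := by
        apply tsub_le_iff_left.mpr
        rcases le_or_gt ε 1 with h | h
        · calc (1:ℝ≥0∞) = (1 - ε) + ε := (tsub_add_cancel_of_le h).symm
            _ ≤ ∑ i ∈ Finset.range (R + 1), β i + ε := add_le_add_left hR ε
        · exact h.le.trans le_add_self
end

section
/- Let S be a countable type, P : S → S → ℝ≥0∞ a stochastic kernel (∑'_{y} P x y = 1 for every x), U : S → S → ℝ≥0∞ with U x y ≤ P x y for all x, y, and δ ∈ ℝ≥0∞. Define the thresholding operator T_δ by (T_δ v) x = v x if v x ≥ δ and (T_δ v) x = 0 otherwise. Let μ, v₀ : S → ℝ≥0∞ with v₀ x ≤ μ x for all x, and define the on-the-fly iteration v_{i+1} = T_δ (v_i · U). Then for every i ∈ ℕ and every x ∈ S: v_i x ≤ (μ·P^i) x. -/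
open scoped ENNReal

/-- The thresholding operator of the on-the-fly algorithm: entries below `δ` are set
to zero. -/
noncomputable def threshold {S : Type*} (δ : ℝ≥0∞) (v : S → ℝ≥0∞) : S → ℝ≥0∞ :=
  fun x => if δ ≤ v x then v x else 0

/-- The on-the-fly iteration (lower-bound step followed by thresholding) stays a
pointwise underapproximation of the true DTMC distributions `μ·P^i`. -/
theorem on_the_fly_lower_bound
    {S : Type*} [Countable S]
    (P : S → S → ℝ≥0∞) (hP : ∀ x, ∑' y, P x y = 1)
    (U : S → S → ℝ≥0∞) (hU : ∀ x y, U x y ≤ P x y)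
    (δ : ℝ≥0∞)
    (μ v₀ : S → ℝ≥0∞) (hv₀ : ∀ x, v₀ x ≤ μ x)
    (v : ℕ → S → ℝ≥0∞) (hv0 : v 0 = v₀)
    (hvs : ∀ i, v (i + 1) = threshold δ (kernelStep (v i) U)) :
    ∀ (i : ℕ) (x : S), v i x ≤ kernelIter μ P i x := by
  intro i
  induction i with
  | zero => intro x; rw [hv0]; exact hv₀ x
  | succ i ih =>
    intro x
    rw [hvs i]
    unfold threshold
    split
    · calc kernelStep (v i) U x ≤ kernelStep (kernelIter μ P i) P x :=
        ENNReal.tsum_le_tsum fun y => mul_le_mul' (ih y) (hU y x)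
      _ = kernelIter μ P (i+1) x := rfl
    · exact zero_le
end
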